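/- Let η : [s,∞) → ℂ be continuously differentiable with η(s) = 0 and define (Lη)(t) = ∫_s^t η(τ)(t-τ)^{-1/2} dτ. Then Lη is differentiable on (s,∞) and d/dt (Lη)(t) = (L η')(t), i.e. ∫_s^t η'(τ)(t-τ)^{-1/2} dτ. -/

import Mathlib

open Real MeasureTheory intervalIntegral Set Filter Topology

namespace AbelAux

lemma ker_integral (a b : ℝ) :
    (∫ σ in a..b, (σ - a) ^ (-(1/2) : ℝ)) = 2 * (b - a) ^ ((1/2) : ℝ) := by
  have h := intervalIntegral.integral_comp_sub_right (a := a) (b := b)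
    (fun x => x ^ (-(1/2) : ℝ)) a
  rw [h, sub_self, integral_rpow (Or.inl (by norm_num))]
  rw [Real.zero_rpow (by norm_num)]
  norm_num
  ring

lemma kerIntOn (τ u : ℝ) (hτu : τ ≤ u) :
    IntegrableOn (fun σ : ℝ => (σ - τ) ^ (-(1/2) : ℝ)) (Ioo τ u) volume := by
  have h := (intervalIntegrable_rpow' (a := τ - τ) (b := u - τ)
    (by norm_num : (-1:ℝ) < -(1/2))).comp_sub_right τ
  simp only [sub_self, zero_add, sub_add_cancel] at h
  rwa [intervalIntegrable_iff_integrableOn_Ioo_of_le hτu] at h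

lemma fubini (s u M : ℝ) (hsu : s < u) (φ : ℝ → ℂ) (hφm : StronglyMeasurable φ)
    (hM : 0 ≤ M) (hφb : ∀ τ ∈ Ioo s u, ‖φ τ‖ ≤ M) :
    ((∫ σ in s..u, ∫ τ in s..σ, φ τ * (((σ - τ) ^ (-(1/2) : ℝ) : ℝ) : ℂ))
        = (∫ τ in s..u, 2 * φ τ * (((u - τ) ^ ((1/2) : ℝ) : ℝ) : ℂ)))
    ∧ IntegrableOn (fun σ => ∫ τ in s..σ, φ τ * (((σ - τ) ^ (-(1/2) : ℝ) : ℝ) : ℂ))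
        (Ioo s u) volume := by
  set μ : Measure ℝ := volume.restrict (Ioo s u) with hμ
  set g : ℝ → ℝ → ℂ := fun σ τ => φ τ * (((σ - τ) ^ (-(1/2) : ℝ) : ℝ) : ℂ) with hg
  set f : ℝ → ℝ → ℂ := fun σ τ => (Ioo s σ).indicator (g σ) τ with hfdef
  -- global strong measurability
  have hset : MeasurableSet {p : ℝ × ℝ | s < p.2 ∧ p.2 < p.1} :=
    (measurableSet_lt measurable_const measurable_snd).inter
      (measurableSet_lt measurable_snd measurable_fst)
  have hgm : StronglyMeasurable (fun p : ℝ × ℝ => g p.1 p.2) := by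
    apply StronglyMeasurable.mul (hφm.comp_measurable measurable_snd)
    apply Measurable.stronglyMeasurable
    fun_prop
  have hSM : StronglyMeasurable (Function.uncurry f) := by
    have heq : Function.uncurry f = {p : ℝ × ℝ | s < p.2 ∧ p.2 < p.1}.indicator
        (fun p : ℝ × ℝ => g p.1 p.2) := by
      funext p
      rcases p with ⟨σ, τ⟩
      simp only [Function.uncurry, hfdef, Set.indicator_apply, mem_Ioo, mem_setOf_eq]
    rw [heq]
    exact hgm.indicator hset
  -- slice representation
  have hrep : ∀ τ, s < τ → (fun σ => f σ τ) = (Ioi τ).indicator (fun σ => g σ τ) := by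
    intro τ hτ
    funext σ
    simp only [hfdef, Set.indicator_apply, mem_Ioo, mem_Ioi, hτ, true_and]
  have hres : ∀ τ, s < τ → μ.restrict (Ioi τ) = volume.restrict (Ioo τ u) := by
    intro τ hτ
    rw [hμ, Measure.restrict_restrict measurableSet_Ioi]
    congr 1
    ext x
    simp only [mem_inter_iff, mem_Ioi, mem_Ioo]
    exact ⟨fun ⟨h1, _, h3⟩ => ⟨h1, h3⟩, fun ⟨h1, h3⟩ => ⟨h1, hτ.trans h1, h3⟩⟩
  -- slice integrability
  have hkerC : ∀ τ ∈ Ioo s u,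
      IntegrableOn (fun σ : ℝ => (((σ - τ) ^ (-(1/2) : ℝ) : ℝ) : ℂ)) (Ioo τ u) volume :=
    fun τ hτ => (kerIntOn τ u hτ.2.le).ofReal
  have hslice : ∀ τ ∈ Ioo s u, Integrable (fun σ => f σ τ) μ := by
    intro τ hτ
    rw [hrep τ hτ.1, integrable_indicator_iff measurableSet_Ioi]
    unfold IntegrableOn
    rw [hres τ hτ.1]
    exact (hkerC τ hτ).const_mul (φ τ)
  -- value of the norm integral
  have hval : ∀ τ ∈ Ioo s u,
      (∫ σ, ‖f σ τ‖ ∂μ) = ‖φ τ‖ * (2 * (u - τ) ^ ((1/2) : ℝ)) := by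
    intro τ hτ
    have h1 : (fun σ => ‖f σ τ‖) = (Ioi τ).indicator (fun σ => ‖g σ τ‖) := by
      have hr := hrep τ hτ.1
      funext σ
      rw [show f σ τ = (Ioi τ).indicator (fun σ' => g σ' τ) σ from by rw [← hr]]
      exact norm_indicator_eq_indicator_norm _ _
    rw [h1, MeasureTheory.integral_indicator measurableSet_Ioi]
    rw [show μ.restrict (Ioi τ) = volume.restrict (Ioo τ u) from hres τ hτ.1]
    have h2 : EqOn (fun σ => ‖g σ τ‖) (fun σ => ‖φ τ‖ * (σ - τ) ^ (-(1/2) : ℝ)) (Ioo τ u) := by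
      intro σ hσ
      simp only [hg, norm_mul, Complex.norm_real]
      rw [Real.norm_eq_abs, abs_of_nonneg (Real.rpow_nonneg (by linarith [hσ.1]) _)]
    rw [setIntegral_congr_fun measurableSet_Ioo h2, MeasureTheory.integral_const_mul]
    congr 1
    rw [← integral_Ioc_eq_integral_Ioo, ← intervalIntegral.integral_of_le hτ.2.le]
    exact ker_integral τ u
  -- integrability of the norm-integral function
  have hnormint : Integrable (fun τ => ∫ σ, ‖f σ τ‖ ∂μ) μ := by
    have hc : Integrable (fun _ : ℝ => M * (2 * (u - s) ^ ((1/2) : ℝ))) μ :=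
      integrableOn_const measure_Ioo_lt_top.ne
    apply Integrable.mono' hc
    · have hn : StronglyMeasurable (Function.uncurry fun σ τ => ‖f σ τ‖) := hSM.norm
      exact (hn.integral_prod_left (μ := μ)).aestronglyMeasurable
    · filter_upwards [ae_restrict_mem measurableSet_Ioo] with τ hτ
      rw [Real.norm_of_nonneg (integral_nonneg fun σ => norm_nonneg _), hval τ hτ]
      have h3 : (u - τ) ^ ((1/2) : ℝ) ≤ (u - s) ^ ((1/2) : ℝ) :=
        Real.rpow_le_rpow (by linarith [hτ.2]) (by linarith [hτ.1]) (by norm_num)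
      have h4 : (0:ℝ) ≤ (u - τ) ^ ((1/2) : ℝ) := Real.rpow_nonneg (by linarith [hτ.2]) _
      calc ‖φ τ‖ * (2 * (u - τ) ^ ((1/2) : ℝ))
          ≤ M * (2 * (u - τ) ^ ((1/2) : ℝ)) := by
            apply mul_le_mul_of_nonneg_right (hφb τ hτ); positivity
        _ ≤ M * (2 * (u - s) ^ ((1/2) : ℝ)) := by
            apply mul_le_mul_of_nonneg_left _ hM; linarith
  -- product integrability
  have hInt : Integrable (Function.uncurry f) (μ.prod μ) := by
    refine (integrable_prod_iff' hSM.aestronglyMeasurable).2 ⟨?_, hnormint⟩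
    filter_upwards [ae_restrict_mem measurableSet_Ioo] with τ hτ
    exact hslice τ hτ
  -- inner integral identities
  have hleft : ∀ σ ∈ Ioo s u, (∫ τ, f σ τ ∂μ)
      = ∫ τ in s..σ, φ τ * (((σ - τ) ^ (-(1/2) : ℝ) : ℝ) : ℂ) := by
    intro σ hσ
    have h1 : (∫ τ, f σ τ ∂μ) = ∫ τ in Ioo s σ, g σ τ ∂μ :=
      MeasureTheory.integral_indicator measurableSet_Ioo
    rw [h1, hμ, Measure.restrict_restrict measurableSet_Ioo,
      inter_eq_left.2 (Ioo_subset_Ioo le_rfl hσ.2.le),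
      intervalIntegral.integral_of_le hσ.1.le, integral_Ioc_eq_integral_Ioo]
  have hright : ∀ τ ∈ Ioo s u, (∫ σ, f σ τ ∂μ)
      = 2 * φ τ * (((u - τ) ^ ((1/2) : ℝ) : ℝ) : ℂ) := by
    intro τ hτ
    rw [hrep τ hτ.1, MeasureTheory.integral_indicator measurableSet_Ioi]
    rw [show μ.restrict (Ioi τ) = volume.restrict (Ioo τ u) from hres τ hτ.1]
    have h1 : (∫ σ in Ioo τ u, g σ τ ∂volume)
        = φ τ * ∫ σ in Ioo τ u, (((σ - τ) ^ (-(1/2) : ℝ) : ℝ) : ℂ) ∂volume :=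
      MeasureTheory.integral_const_mul _ _
    rw [h1]
    have h2 : (∫ σ in Ioo τ u, (((σ - τ) ^ (-(1/2) : ℝ) : ℝ) : ℂ) ∂volume)
        = ((2 * (u - τ) ^ ((1/2) : ℝ) : ℝ) : ℂ) := by
      rw [← integral_Ioc_eq_integral_Ioo, ← intervalIntegral.integral_of_le hτ.2.le,
        intervalIntegral.integral_ofReal, ker_integral τ u]
    rw [h2]
    push_cast
    ring
  constructor
  · -- the swap identity
    have hL : (∫ σ in s..u, ∫ τ in s..σ, φ τ * (((σ - τ) ^ (-(1/2) : ℝ) : ℝ) : ℂ))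
        = ∫ σ, (∫ τ, f σ τ ∂μ) ∂μ := by
      rw [intervalIntegral.integral_of_le hsu.le, integral_Ioc_eq_integral_Ioo]
      exact (setIntegral_congr_fun measurableSet_Ioo (fun σ hσ => (hleft σ hσ))).symm
    have hR : (∫ τ, (∫ σ, f σ τ ∂μ) ∂μ)
        = ∫ τ in s..u, 2 * φ τ * (((u - τ) ^ ((1/2) : ℝ) : ℝ) : ℂ) := by
      rw [intervalIntegral.integral_of_le hsu.le, integral_Ioc_eq_integral_Ioo]
      exact setIntegral_congr_fun measurableSet_Ioo (fun τ hτ => (hright τ hτ))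
    rw [hL, integral_integral_swap hInt, hR]
  · have h5 : Integrable (fun σ => ∫ τ, f σ τ ∂μ) μ := hInt.integral_prod_left
    apply h5.congr
    filter_upwards [ae_restrict_mem measurableSet_Ioo] with σ hσ
    exact hleft σ hσ

lemma ker_intIntC (a b r : ℝ) (hr : -1 < r) :
    IntervalIntegrable (fun τ => (((b - τ) ^ r : ℝ) : ℂ)) volume a b := by
  have h := (intervalIntegrable_rpow' (a := b - a) (b := b - b) hr).comp_sub_left b
  simp only [sub_sub_cancel] at h
  rw [intervalIntegrable_iff] at h ⊢
  exact h.ofReal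

lemma mul_kerC_intInt (s u r : ℝ) (hsu : s ≤ u) (hr : -1 < r) (g : ℝ → ℂ)
    (hg : ContinuousOn g (Icc s u)) :
    IntervalIntegrable (fun τ => g τ * (((u - τ) ^ r : ℝ) : ℂ)) volume s u :=
  (ker_intIntC s u r hr).continuousOn_mul (by rwa [uIcc_of_le hsu])

lemma parts (s u : ℝ) (hsu : s < u) (η φ : ℝ → ℂ)
    (hηc : ContinuousOn η (Icc s u)) (hηs : η s = 0)
    (hd : ∀ x ∈ Ioo s u, HasDerivAt η (φ x) x)
    (hint : IntervalIntegrable (fun τ => φ τ * (((u - τ) ^ ((1/2) : ℝ) : ℝ) : ℂ)) volume s u) :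
    ∫ τ in s..u, η τ * (((u - τ) ^ (-(1/2) : ℝ) : ℝ) : ℂ)
      = ∫ τ in s..u, 2 * φ τ * (((u - τ) ^ ((1/2) : ℝ) : ℝ) : ℂ) := by
  set f : ℝ → ℂ := fun τ => (-2 : ℂ) * η τ * (((u - τ) ^ ((1/2) : ℝ) : ℝ) : ℂ) with hf
  set F' : ℝ → ℂ := fun τ => η τ * (((u - τ) ^ (-(1/2) : ℝ) : ℝ) : ℂ)
      - 2 * φ τ * (((u - τ) ^ ((1/2) : ℝ) : ℝ) : ℂ) with hF'
  have hA : IntervalIntegrable (fun τ => η τ * (((u - τ) ^ (-(1/2) : ℝ) : ℝ) : ℂ)) volume s u :=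
    mul_kerC_intInt s u _ hsu.le (by norm_num) η hηc
  have hB : IntervalIntegrable (fun τ => 2 * φ τ * (((u - τ) ^ ((1/2) : ℝ) : ℝ) : ℂ)) volume s u := by
    simpa [mul_assoc] using hint.const_mul (2 : ℂ)
  have hker : Continuous (fun τ : ℝ => (((u - τ) ^ ((1/2) : ℝ) : ℝ) : ℂ)) :=
    Complex.continuous_ofReal.comp
      ((Real.continuous_rpow_const (by norm_num)).comp (continuous_const.sub continuous_id))
  have hcont : ContinuousOn f (Icc s u) :=
    (continuousOn_const.mul hηc).mul hker.continuousOn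
  have hderiv : ∀ x ∈ Ioo s u, HasDerivAt f (F' x) x := by
    intro x hx
    have hne : u - x ≠ 0 := sub_ne_zero.2 (ne_of_gt hx.2)
    have h0 : HasDerivAt (fun τ : ℝ => u - τ) (-1) x := by
      simpa using (hasDerivAt_id x).const_sub u
    have h1 : HasDerivAt (fun τ : ℝ => (u - τ) ^ ((1/2) : ℝ))
        (((1/2 : ℝ) * (u - x) ^ ((1/2 : ℝ) - 1)) * (-1)) x :=
      (Real.hasDerivAt_rpow_const (p := (1/2 : ℝ)) (Or.inl hne)).comp x h0
    have h2 := (((hd x hx).const_mul (-2 : ℂ)).mul h1.ofReal_comp)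
    have he : ((1/2 : ℝ) - 1) = -(1/2 : ℝ) := by norm_num
    rw [he] at h2
    refine h2.congr_deriv ?_
    simp only [hF']
    push_cast
    ring
  have hFTC := intervalIntegral.integral_eq_sub_of_hasDeriv_right_of_le hsu.le hcont
      (fun x hx => (hderiv x hx).hasDerivWithinAt) (hA.sub hB)
  have hfu : f u = 0 := by
    simp [hf, sub_self, Real.zero_rpow (by norm_num : ((1/2 : ℝ)) ≠ 0)]
  have hfs : f s = 0 := by simp [hf, hηs]
  rw [hfu, hfs, sub_zero] at hFTC
  have := intervalIntegral.integral_sub hA hB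
  rw [hFTC] at this
  exact sub_eq_zero.1 this.symm

lemma Hcont (s t₀ δ M : ℝ) (hδ : 0 < δ) (hsδ : s < t₀ - δ)
    (φ : ℝ → ℂ) (hφm : StronglyMeasurable φ)
    (hφc : ∀ x, s < x → ContinuousAt φ x)
    (hφb : ∀ x ∈ Ioc s (t₀ + δ), ‖φ x‖ ≤ M) :
    ContinuousAt (fun σ => ∫ τ in s..σ, φ τ * (((σ - τ) ^ (-(1/2) : ℝ) : ℝ) : ℂ)) t₀ := by
  have hM : 0 ≤ M := le_trans (norm_nonneg _) (hφb t₀ ⟨by linarith, by linarith⟩)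
  set b : ℝ := t₀ + δ with hbdef
  have hsb : s < b := by rw [hbdef]; linarith
  set ν : Measure ℝ := volume.restrict (Ioo 0 (b - s)) with hν
  set F : ℝ → ℝ → ℂ := fun σ v =>
    (Iio (σ - s)).indicator (fun v => φ (σ - v) * ((v ^ (-(1/2) : ℝ) : ℝ) : ℂ)) v with hF
  have hnhds : Ioo (t₀ - δ) b ∈ 𝓝 t₀ :=
    isOpen_Ioo.mem_nhds ⟨by linarith, by rw [hbdef]; linarith⟩
  -- representation
  have hrep : ∀ σ ∈ Ioo (t₀ - δ) b,
      (∫ τ in s..σ, φ τ * (((σ - τ) ^ (-(1/2) : ℝ) : ℝ) : ℂ)) = ∫ v, F σ v ∂ν := by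
    intro σ hσ
    have hsσ : s < σ := by linarith [hσ.1]
    have h1 : (∫ τ in s..σ, φ τ * (((σ - τ) ^ (-(1/2) : ℝ) : ℝ) : ℂ))
        = ∫ v in (0:ℝ)..(σ - s), φ (σ - v) * ((v ^ (-(1/2) : ℝ) : ℝ) : ℂ) := by
      have h2 := intervalIntegral.integral_comp_sub_left (a := s) (b := σ)
        (fun x => φ (σ - x) * ((x ^ (-(1/2) : ℝ) : ℝ) : ℂ)) σ
      rw [sub_self] at h2
      rw [← h2]
      apply intervalIntegral.integral_congr
      intro τ _
      simp [sub_sub_cancel]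
    rw [h1]
    have h3 : (∫ v, F σ v ∂ν) = ∫ v in Iio (σ - s), (fun v => φ (σ - v)
        * ((v ^ (-(1/2) : ℝ) : ℝ) : ℂ)) v ∂ν := MeasureTheory.integral_indicator measurableSet_Iio
    rw [h3, hν, Measure.restrict_restrict measurableSet_Iio]
    have h4 : Iio (σ - s) ∩ Ioo 0 (b - s) = Ioo 0 (σ - s) := by
      ext v
      simp only [mem_inter_iff, mem_Iio, mem_Ioo]
      constructor
      · rintro ⟨h5, h6, _⟩; exact ⟨h6, h5⟩
      · rintro ⟨h5, h6⟩; exact ⟨h6, h5, by linarith [hσ.2]⟩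
    rw [h4, intervalIntegral.integral_of_le (by linarith : (0:ℝ) ≤ σ - s),
      integral_Ioc_eq_integral_Ioo]
  -- dominated convergence
  have hcont2 : ContinuousAt (fun σ => ∫ v, F σ v ∂ν) t₀ := by
    apply MeasureTheory.continuousAt_of_dominated (bound := fun v => M * v ^ (-(1/2) : ℝ))
    · apply Eventually.of_forall
      intro σ
      apply StronglyMeasurable.aestronglyMeasurable
      apply StronglyMeasurable.indicator _ measurableSet_Iio
      exact (hφm.comp_measurable (measurable_const.sub measurable_id)).mul
        (Measurable.stronglyMeasurable (by fun_prop))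
    · filter_upwards [hnhds] with σ hσ
      filter_upwards [ae_restrict_mem measurableSet_Ioo] with v hv
      by_cases hcase : v < σ - s
      · rw [show F σ v = φ (σ - v) * ((v ^ (-(1/2) : ℝ) : ℝ) : ℂ) from
          Set.indicator_of_mem (by exact hcase) _]
        rw [norm_mul, Complex.norm_real, Real.norm_eq_abs,
          abs_of_nonneg (Real.rpow_nonneg hv.1.le _)]
        apply mul_le_mul_of_nonneg_right _ (Real.rpow_nonneg hv.1.le _)
        apply hφb
        constructor
        · linarith
        · have := hv.1; have := hσ.2; linarith
      · rw [show F σ v = 0 from Set.indicator_of_notMem (by exact hcase) _]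
        simp only [norm_zero]
        exact mul_nonneg hM (Real.rpow_nonneg hv.1.le _)
    · apply Integrable.const_mul
      have h := intervalIntegrable_rpow' (a := 0) (b := b - s)
        (by norm_num : (-1:ℝ) < -(1/2))
      rw [intervalIntegrable_iff_integrableOn_Ioo_of_le (by linarith)] at h
      exact h
    · have h0 : ∀ᵐ (v : ℝ) ∂ν, v ≠ t₀ - s :=
        ae_restrict_of_ae (compl_mem_ae_iff.2 (measure_singleton _))
      filter_upwards [ae_restrict_mem measurableSet_Ioo, h0] with v hv hne
      rcases lt_or_gt_of_ne hne with hlt | hgt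
      · -- v < t₀ - s : F σ v = φ (σ - v) * c near t₀
        have hev : ∀ᶠ σ in 𝓝 t₀, F σ v = φ (σ - v) * ((v ^ (-(1/2) : ℝ) : ℝ) : ℂ) := by
          filter_upwards [Ioi_mem_nhds (by linarith : s + v < t₀)] with σ hσ
          exact Set.indicator_of_mem (by simp only [mem_Iio]; linarith [mem_Ioi.1 hσ]) _
        have hc : ContinuousAt (fun σ => φ (σ - v) * ((v ^ (-(1/2) : ℝ) : ℝ) : ℂ)) t₀ := by
          apply ContinuousAt.mul _ continuousAt_const
          exact ContinuousAt.comp (x := t₀) (hφc (t₀ - v) (by linarith))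
            ((continuousAt_id.sub continuousAt_const) : ContinuousAt (fun σ : ℝ => σ - v) t₀)
        exact hc.congr (hev.mono fun σ h => h.symm)
      · -- v > t₀ - s : F σ v = 0 near t₀
        have hev : ∀ᶠ σ in 𝓝 t₀, F σ v = 0 := by
          filter_upwards [Iio_mem_nhds (by linarith : t₀ < s + v)] with σ hσ
          exact Set.indicator_of_notMem (by simp only [mem_Iio, not_lt]; linarith [mem_Iio.1 hσ]) _
        exact continuousAt_const.congr (hev.mono fun σ h => h.symm)
  exact hcont2.congr (Filter.eventuallyEq_of_mem hnhds fun σ hσ => (hrep σ hσ).symm)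

lemma bdd_intInt (s u C : ℝ) (hsu : s ≤ u) (ψ : ℝ → ℂ) (hm : StronglyMeasurable ψ)
    (hb : ∀ x ∈ Ioc s u, ‖ψ x‖ ≤ C) : IntervalIntegrable ψ volume s u := by
  rw [intervalIntegrable_iff_integrableOn_Ioc_of_le hsu]
  apply Measure.integrableOn_of_bounded measure_Ioc_lt_top.ne hm.aestronglyMeasurable
  filter_upwards [ae_restrict_mem measurableSet_Ioc] with x hx using hb x hx


end AbelAux

open Real MeasureTheory intervalIntegral

/-- If `η` is `C¹` on `[s,∞)` with `η s = 0`, then the Abel integral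
`(Lη)(t) = ∫_s^t η(τ) (t-τ)^{-1/2} dτ` is differentiable on `(s,∞)` with
`d/dt (Lη)(t) = ∫_s^t η'(τ) (t-τ)^{-1/2} dτ`. -/
theorem deriv_abel_eq_abel_deriv (s : ℝ) (η : ℝ → ℂ)
    (hη : ContDiffOn ℝ 1 η (Set.Ici s)) (hηs : η s = 0) :
    ∀ t > s, HasDerivAt (fun u : ℝ => ∫ τ in s..u, η τ * (((u - τ) ^ (-(1/2) : ℝ) : ℝ) : ℂ))
      (∫ τ in s..t, derivWithin η (Set.Ici s) τ * (((t - τ) ^ (-(1/2) : ℝ) : ℝ) : ℂ)) t := by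
  intro t ht
  set φ : ℝ → ℂ := deriv η with hφdef
  have hηc : ContinuousOn η (Set.Ici s) := hη.continuousOn
  have hd' : ContinuousOn (derivWithin η (Set.Ici s)) (Set.Ici s) :=
    hη.continuousOn_derivWithin (uniqueDiffOn_Ici s) le_rfl
  have heq : ∀ x, s < x → derivWithin η (Set.Ici s) x = φ x := fun x hx =>
    derivWithin_of_mem_nhds (Ici_mem_nhds hx)
  have hdiff : ∀ x, s < x → HasDerivAt η (φ x) x := fun x hx =>
    (((hη.differentiableOn one_ne_zero) x (le_of_lt hx)).differentiableAt
      (Ici_mem_nhds hx)).hasDerivAt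
  have hφm : StronglyMeasurable φ := stronglyMeasurable_deriv η
  have hφc : ∀ x, s < x → ContinuousAt φ x := by
    intro x hx
    have h1 : ContinuousAt (derivWithin η (Set.Ici s)) x := hd'.continuousAt (Ici_mem_nhds hx)
    exact h1.congr (Filter.eventually_of_mem (Ioi_mem_nhds hx) fun y hy => heq y hy)
  have hbound : ∀ u, s < u → ∃ M, 0 ≤ M ∧ ∀ x ∈ Set.Ioc s u, ‖φ x‖ ≤ M := by
    intro u hu
    obtain ⟨C, hC⟩ := (isCompact_Icc (a := s) (b := u)).exists_bound_of_continuousOn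
      (hd'.mono Set.Icc_subset_Ici_self)
    refine ⟨max C 0, le_max_right _ _, fun x hx => ?_⟩
    rw [← heq x hx.1]
    exact le_trans (hC x ⟨hx.1.le, hx.2⟩) (le_max_left _ _)
  have hstep : ∀ u, s < u →
      (∫ τ in s..u, η τ * (((u - τ) ^ (-(1/2) : ℝ) : ℝ) : ℂ))
        = ∫ σ in s..u, ∫ τ in s..σ, φ τ * (((σ - τ) ^ (-(1/2) : ℝ) : ℝ) : ℂ) := by
    intro u hu
    obtain ⟨M, hM0, hM⟩ := hbound u hu
    have hint : IntervalIntegrable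
        (fun τ => φ τ * (((u - τ) ^ ((1/2) : ℝ) : ℝ) : ℂ)) volume s u := by
      apply AbelAux.bdd_intInt s u (M * (u - s) ^ ((1/2) : ℝ)) hu.le
      · exact hφm.mul (Measurable.stronglyMeasurable (by fun_prop))
      · intro x hx
        rw [norm_mul, Complex.norm_real, Real.norm_eq_abs,
          abs_of_nonneg (Real.rpow_nonneg (by linarith [hx.2]) _)]
        exact mul_le_mul (hM x hx)
          (Real.rpow_le_rpow (by linarith [hx.2]) (by linarith [hx.1]) (by norm_num))
          (Real.rpow_nonneg (by linarith [hx.2]) _) hM0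
    have h1 := AbelAux.parts s u hu η φ (hηc.mono Set.Icc_subset_Ici_self) hηs
      (fun x hx => hdiff x hx.1) hint
    have h2 := (AbelAux.fubini s u M hu φ hφm hM0 (fun τ hτ => hM τ ⟨hτ.1, hτ.2.le⟩)).1
    rw [h1, ← h2]
  obtain ⟨M, hM0, hM⟩ := hbound (t + (t - s)/2) (by linarith)
  have hCA : ∀ x, s < x → ContinuousAt
      (fun σ => ∫ τ in s..σ, φ τ * (((σ - τ) ^ (-(1/2) : ℝ) : ℝ) : ℂ)) x := by
    intro x hx
    obtain ⟨Mx, hMx0, hMx⟩ := hbound (x + (x - s)/2) (by linarith)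
    exact AbelAux.Hcont s x ((x - s)/2) Mx (by linarith) (by linarith) φ hφm hφc hMx
  have hIntH : IntervalIntegrable
      (fun σ => ∫ τ in s..σ, φ τ * (((σ - τ) ^ (-(1/2) : ℝ) : ℝ) : ℂ)) volume s t := by
    rw [intervalIntegrable_iff_integrableOn_Ioo_of_le ht.le]
    exact (AbelAux.fubini s t M ht φ hφm hM0 (fun τ hτ => hM τ ⟨hτ.1, by linarith [hτ.2]⟩)).2
  have hCO : ContinuousOn
      (fun σ => ∫ τ in s..σ, φ τ * (((σ - τ) ^ (-(1/2) : ℝ) : ℝ) : ℂ)) (Set.Ioi s) :=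
    fun x hx => (hCA x hx).continuousWithinAt
  have hSMAF : StronglyMeasurableAtFilter
      (fun σ => ∫ τ in s..σ, φ τ * (((σ - τ) ^ (-(1/2) : ℝ) : ℝ) : ℂ)) (nhds t) volume :=
    by exact ⟨Set.Ioi s, Ioi_mem_nhds ht, hCO.aestronglyMeasurable measurableSet_Ioi⟩
  have hJ := intervalIntegral.integral_hasDerivAt_right hIntH hSMAF (hCA t ht)
  have hF : HasDerivAt
      (fun u : ℝ => ∫ τ in s..u, η τ * (((u - τ) ^ (-(1/2) : ℝ) : ℝ) : ℂ))
      (∫ τ in s..t, φ τ * (((t - τ) ^ (-(1/2) : ℝ) : ℝ) : ℂ)) t := by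
    apply hJ.congr_of_eventuallyEq
    exact Filter.eventually_of_mem (Ioi_mem_nhds ht) fun u hu => hstep u hu
  have hval : (∫ τ in s..t, derivWithin η (Set.Ici s) τ * (((t - τ) ^ (-(1/2) : ℝ) : ℝ) : ℂ))
      = ∫ τ in s..t, φ τ * (((t - τ) ^ (-(1/2) : ℝ) : ℝ) : ℂ) := by
    apply intervalIntegral.integral_congr_ae
    apply MeasureTheory.ae_of_all
    intro x hx
    rw [Set.uIoc_of_le ht.le] at hx
    rw [heq x hx.1]
  rw [hval]
  exact hF
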